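/- Let X be a complex Hilbert space, D : X →L[ℂ] X bounded, G, R bounded self-adjoint with ⟨Gx,x⟩ ≥ 0 for all x and R uniformly positive (⟨Rx,x⟩ ≥ r₀‖x‖² for some r₀ > 0, all x). Then the kernel of A = [[-G, -D*], [D, -R]] equals (ker G ∩ ker D) × {0}. -/

import Mathlib

open ContinuousLinearMap

local notation "⟪" x ", " y "⟫" => @inner ℂ _ _ x y

/-- `ker A = (ker G ∩ ker D) × {0}` for `A = [[-G,-D*],[D,-R]]` with `G ≥ 0` and `R`
uniformly positive. -/
theorem stmt4 {X : Type*} [NormedAddCommGroup X] [InnerProductSpace ℂ X] [CompleteSpace X]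
    (D G R : X →L[ℂ] X) (hG : IsSelfAdjoint G) (hR : IsSelfAdjoint R)
    (hGpos : ∀ x : X, 0 ≤ (⟪G x, x⟫).re)
    (r₀ : ℝ) (hr₀ : 0 < r₀)
    (hRpos : ∀ x : X, r₀ * ‖x‖ ^ 2 ≤ (⟪R x, x⟫).re)
    (A : (X × X) →L[ℂ] (X × X))
    (hA : ∀ x₁ x₂ : X, A (x₁, x₂) =
      (-(G x₁) - (ContinuousLinearMap.adjoint D) x₂, D x₁ - R x₂)) :
    LinearMap.ker (A : (X × X) →ₗ[ℂ] (X × X)) = (LinearMap.ker (G : X →ₗ[ℂ] X) ⊓ LinearMap.ker (D : X →ₗ[ℂ] X)).prod ⊥ := by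
  ext ⟨x₁, x₂⟩
  simp only [LinearMap.mem_ker, ContinuousLinearMap.coe_coe, Submodule.mem_prod,
    Submodule.mem_inf, Submodule.mem_bot, hA, Prod.mk_eq_zero]
  constructor
  · rintro ⟨h1, h2⟩
    have hG1 : G x₁ = -((ContinuousLinearMap.adjoint D) x₂) := by
      rw [sub_eq_zero] at h1
      rwa [neg_eq_iff_eq_neg] at h1
    have hD2 : D x₁ = R x₂ := sub_eq_zero.mp h2
    have key : (⟪G x₁, x₁⟫).re = -(⟪R x₂, x₂⟫).re := by
      rw [hG1, inner_neg_left, Complex.neg_re, adjoint_inner_left, hD2, ← inner_conj_symm, Complex.conj_re]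
    have h0 : ‖x₂‖ ^ 2 ≤ 0 := by nlinarith [hGpos x₁, hRpos x₂]
    have hx2 : x₂ = 0 := by
      have : ‖x₂‖ ^ 2 = 0 := le_antisymm h0 (sq_nonneg _)
      simpa [pow_eq_zero_iff] using this
    subst hx2
    simp only [map_zero, neg_zero] at hG1 hD2
    exact ⟨⟨hG1, hD2⟩, rfl⟩
  · rintro ⟨⟨hGx, hDx⟩, hx2⟩
    subst hx2
    simp [hGx, hDx]
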